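/- Let U* ⊆ {1,…,M} have cardinality m ≥ 1 and V* ⊆ {1,…,N} have cardinality n ≥ 1, with characteristic vectors ū ∈ R^M and v̄ ∈ R^N, and let X* = ū v̄ᵀ. Suppose X* is feasible for the relaxation (R), i.e., U* × V* ⊆ E. Suppose there exist W ∈ R^{M×N}, λ ∈ R^{M×N}, and μ ≥ 0 such that W v̄ = 0, ūᵀ W = 0, ‖W‖ ≤ 1, and ū v̄ᵀ/√(mn) + W = μ e eᵀ + Σ_{(i,j) ∈ Ẽ} λ_{ij} e_i e_jᵀ, where e is the all-ones vector and e_i is the i-th standard basis vector. Then X* is an optimal solution of (R), i.e., every X ∈ R^{M×N} with Σ_{i,j} X_{ij} ≥ mn and X_{ij} = 0 for all (i,j) ∈ Ẽ satisfies ‖X‖_* ≥ ‖X*‖_* = √(mn). -/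

import Mathlib

open Matrix

/-- The spectral norm (largest singular value) of a real matrix. -/
noncomputable def matrixSpectralNorm {m n : Type*} [Fintype m] [Fintype n] [DecidableEq n]
    (A : Matrix m n ℝ) : ℝ :=
  ‖LinearMap.toContinuousLinearMap (Matrix.toEuclideanLin A)‖

/-- The nuclear norm (sum of singular values) of a real matrix. -/
noncomputable def nuclearNorm {m n : Type*} [Fintype m] [Fintype n] [DecidableEq n]
    (A : Matrix m n ℝ) : ℝ :=
  ∑ j, Real.sqrt ((by simpa using Matrix.isHermitian_conjTranspose_mul_self A :
    (Aᵀ * A).IsHermitian).eigenvalues j)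

/-- The characteristic vector of a finite set of indices. -/
def charVec {ι : Type*} [DecidableEq ι] (S : Finset ι) : ι → ℝ :=
  fun i => if i ∈ S then 1 else 0

/-- Feasibility for the relaxation (R): `∑_{i,j} X_{ij} ≥ mn` and `X_{ij} = 0` for all
`(i,j)` in the complement of `E`. -/
def FeasR {M N : ℕ} (E : Set (Fin M × Fin N)) (m n : ℕ)
    (X : Matrix (Fin M) (Fin N) ℝ) : Prop :=
  (m : ℝ) * n ≤ (∑ i, ∑ j, X i j) ∧ ∀ i j, (i, j) ∉ E → X i j = 0

lemma isHermitian_transpose_mul_self_real {m n : Type*} [Fintype m] (A : Matrix m n ℝ) :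
    (Aᵀ * A).IsHermitian := by
  simpa using Matrix.isHermitian_conjTranspose_mul_self A

section AuxHelpers

variable {M N : Type*} [Fintype M] [Fintype N] [DecidableEq N]

lemma norm_symm {k : Type*} [Fintype k] (z : k → ℝ) :
    ‖(WithLp.equiv 2 (k → ℝ)).symm z‖ = Real.sqrt (z ⬝ᵥ z) := by
  rw [EuclideanSpace.norm_eq]; congr 1
  simp [dotProduct, sq_abs, pow_two]

lemma norm_toLp {k : Type*} [Fintype k] (z : k → ℝ) :
    ‖WithLp.toLp 2 z‖ = Real.sqrt (z ⬝ᵥ z) := norm_symm z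

lemma dot_le_sqrt {k : Type*} [Fintype k] (a b : k → ℝ) :
    a ⬝ᵥ b ≤ Real.sqrt (a ⬝ᵥ a) * Real.sqrt (b ⬝ᵥ b) := by
  have := real_inner_le_norm ((WithLp.equiv 2 (k → ℝ)).symm a) ((WithLp.equiv 2 (k → ℝ)).symm b)
  rw [norm_symm, norm_symm] at this
  simpa [PiLp.inner_apply, dotProduct, RCLike.inner_apply, mul_comm] using this

lemma mulVec_norm_le (A : Matrix M N ℝ) (x : N → ℝ) :
    Real.sqrt ((A *ᵥ x) ⬝ᵥ (A *ᵥ x)) ≤ matrixSpectralNorm A * Real.sqrt (x ⬝ᵥ x) := by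
  have h := (LinearMap.toContinuousLinearMap (Matrix.toEuclideanLin A)).le_opNorm
    ((WithLp.equiv 2 (N → ℝ)).symm x)
  simpa [Matrix.toEuclideanLin_apply, norm_symm, norm_toLp, matrixSpectralNorm] using h

lemma spectralNorm_le_of (A : Matrix M N ℝ) {c : ℝ} (hc : 0 ≤ c)
    (h : ∀ x : N → ℝ, Real.sqrt ((A *ᵥ x) ⬝ᵥ (A *ᵥ x)) ≤ c * Real.sqrt (x ⬝ᵥ x)) :
    matrixSpectralNorm A ≤ c := by
  apply ContinuousLinearMap.opNorm_le_bound _ hc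
  intro x
  have h2 := h ((WithLp.equiv 2 (N → ℝ)) x)
  have h3 : ‖x‖ = Real.sqrt ((WithLp.equiv 2 (N → ℝ)) x ⬝ᵥ (WithLp.equiv 2 (N → ℝ)) x) := by
    rw [← norm_symm]; simp
  rw [← h3] at h2
  simpa [Matrix.toEuclideanLin_apply, norm_symm, norm_toLp] using h2

lemma dot_self_nonneg' {k : Type*} [Fintype k] (a : k → ℝ) : 0 ≤ a ⬝ᵥ a :=
  Finset.sum_nonneg fun _ _ => mul_self_nonneg _

lemma dot_le_of_sqrt_le {a b : ℝ} (ha : 0 ≤ a) (hb : 0 ≤ b)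
    (h : Real.sqrt a ≤ Real.sqrt b) : a ≤ b := by
  have := mul_self_le_mul_self (Real.sqrt_nonneg a) h
  rwa [Real.mul_self_sqrt ha, Real.mul_self_sqrt hb] at this

lemma conjT_real (A : Matrix M N ℝ) : Aᴴ = Aᵀ := by
  ext i j; simp [conjTranspose_apply]

lemma dot_conjT (A : Matrix M N ℝ) (v : N → ℝ) (w : M → ℝ) :
    v ⬝ᵥ (Aᴴ *ᵥ w) = (A *ᵥ v) ⬝ᵥ w := by
  rw [conjT_real, Matrix.dotProduct_mulVec v, Matrix.vecMul_transpose]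

lemma dot_mulVec_self (X : Matrix M N ℝ) (v : N → ℝ) :
    (X *ᵥ v) ⬝ᵥ (X *ᵥ v) = v ⬝ᵥ ((Xᴴ * X) *ᵥ v) := by
  rw [← Matrix.mulVec_mulVec, dot_conjT]

lemma diag_conj_entry {n : Type*} [Fintype n] (C V : Matrix n n ℝ) (j : n) :
    (star V * C * V) j j = (fun i => V i j) ⬝ᵥ (C *ᵥ (fun i => V i j)) := by
  simp only [Matrix.mul_apply, Matrix.star_apply, star_trivial, mulVec, dotProduct,
    Finset.sum_mul, Finset.mul_sum]
  rw [Finset.sum_comm]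
  exact Finset.sum_congr rfl fun k _ => Finset.sum_congr rfl fun l _ => by ring

lemma trace_eq_sum_eig {n : Type*} [Fintype n] [DecidableEq n] {B : Matrix n n ℝ}
    (hB : B.IsHermitian) : B.trace = ∑ i, hB.eigenvalues i := by
  simpa using hB.trace_eq_sum_eigenvalues

lemma eig_basis_dot_one {n : Type*} [Fintype n] [DecidableEq n] {B : Matrix n n ℝ}
    (hB : B.IsHermitian) (j : n) :
    ⇑(hB.eigenvectorBasis j) ⬝ᵥ ⇑(hB.eigenvectorBasis j) = 1 := by
  have h3 : ‖(hB.eigenvectorBasis j)‖ ^ 2 = 1 := by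
    rw [hB.eigenvectorBasis.orthonormal.1 j]; norm_num
  rw [← real_inner_self_eq_norm_sq] at h3
  simp only [PiLp.inner_apply, RCLike.inner_apply, conj_trivial] at h3
  simpa [dotProduct] using h3

lemma sqrt_dot_X_eigBasis (X : Matrix M N ℝ) (j : N) :
    Real.sqrt ((X *ᵥ ⇑((isHermitian_transpose_mul_self_real X).eigenvectorBasis j))
      ⬝ᵥ (X *ᵥ ⇑((isHermitian_transpose_mul_self_real X).eigenvectorBasis j)))
      = Real.sqrt ((isHermitian_transpose_mul_self_real X).eigenvalues j) := by
  set hB := isHermitian_transpose_mul_self_real X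
  rw [dot_mulVec_self, conjT_real, hB.mulVec_eigenvectorBasis, dotProduct_smul,
    eig_basis_dot_one]
  simp

/-- The key duality inequality: `⟨A, X⟩ ≤ ‖A‖ ‖X‖_*` when `‖A‖ ≤ 1`. -/
lemma sum_mul_le_nuclearNorm (A X : Matrix M N ℝ) (hA : matrixSpectralNorm A ≤ 1) :
    ∑ i, ∑ j, A i j * X i j ≤ nuclearNorm X := by
  set hB := isHermitian_transpose_mul_self_real X with hBdef
  set V := hB.eigenvectorUnitary with hV
  have step1 : ∑ i, ∑ j, A i j * X i j = (Aᴴ * X).trace := by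
    rw [Finset.sum_comm]
    simp [Matrix.trace, Matrix.diag, Matrix.mul_apply, conjTranspose_apply]
  have key : ((star (V : Matrix N N ℝ)) * (Aᴴ * X) * (V : Matrix N N ℝ)).trace
      = (Aᴴ * X).trace := by
    rw [Matrix.trace_mul_cycle,
      show (V : Matrix N N ℝ) * star (V : Matrix N N ℝ) = 1 from V.2.2, one_mul]
  have step2 : (Aᴴ * X).trace
      = ∑ j, (star (V : Matrix N N ℝ) * (Aᴴ * X) * (V : Matrix N N ℝ)) j j := by
    rw [← key]; rfl
  have step3 : ∀ j, (star (V : Matrix N N ℝ) * (Aᴴ * X) * (V : Matrix N N ℝ)) j j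
      = (A *ᵥ ⇑(hB.eigenvectorBasis j)) ⬝ᵥ (X *ᵥ ⇑(hB.eigenvectorBasis j)) := by
    intro j
    rw [diag_conj_entry]
    have hcol : (fun i => (V : Matrix N N ℝ) i j) = ⇑(hB.eigenvectorBasis j) := rfl
    rw [hcol, ← Matrix.mulVec_mulVec, dot_conjT]
  have step4 : ∀ j, (A *ᵥ ⇑(hB.eigenvectorBasis j)) ⬝ᵥ (X *ᵥ ⇑(hB.eigenvectorBasis j))
      ≤ Real.sqrt (hB.eigenvalues j) := by
    intro j
    calc (A *ᵥ ⇑(hB.eigenvectorBasis j)) ⬝ᵥ (X *ᵥ ⇑(hB.eigenvectorBasis j))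
        ≤ Real.sqrt ((A *ᵥ ⇑(hB.eigenvectorBasis j)) ⬝ᵥ (A *ᵥ ⇑(hB.eigenvectorBasis j)))
          * Real.sqrt ((X *ᵥ ⇑(hB.eigenvectorBasis j)) ⬝ᵥ (X *ᵥ ⇑(hB.eigenvectorBasis j))) :=
          dot_le_sqrt _ _
      _ ≤ 1 * Real.sqrt (hB.eigenvalues j) := by
          rw [sqrt_dot_X_eigBasis]
          apply mul_le_mul_of_nonneg_right _ (Real.sqrt_nonneg _)
          calc Real.sqrt ((A *ᵥ ⇑(hB.eigenvectorBasis j)) ⬝ᵥ (A *ᵥ ⇑(hB.eigenvectorBasis j)))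
              ≤ matrixSpectralNorm A
                * Real.sqrt (⇑(hB.eigenvectorBasis j) ⬝ᵥ ⇑(hB.eigenvectorBasis j)) :=
                mulVec_norm_le _ _
            _ ≤ 1 := by rw [eig_basis_dot_one]; simpa using hA
      _ = Real.sqrt (hB.eigenvalues j) := one_mul _
  rw [step1, step2]
  unfold nuclearNorm
  refine Finset.sum_le_sum fun j _ => ?_
  rw [step3 j]
  exact step4 j

lemma eig_quadratic {n : Type*} [Fintype n] [DecidableEq n] {B : Matrix n n ℝ}
    (hB : B.IsHermitian) {c : ℝ} (hsq : B * B = c • B) (j : n) :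
    hB.eigenvalues j * (hB.eigenvalues j - c) = 0 := by
  set lam := hB.eigenvalues j with hlam
  have h1 : B *ᵥ ⇑(hB.eigenvectorBasis j) = lam • ⇑(hB.eigenvectorBasis j) :=
    hB.mulVec_eigenvectorBasis j
  have h2 : (B * B) *ᵥ ⇑(hB.eigenvectorBasis j) = (lam * lam) • ⇑(hB.eigenvectorBasis j) := by
    rw [← Matrix.mulVec_mulVec, h1, Matrix.mulVec_smul, h1, smul_smul]
  rw [hsq, Matrix.smul_mulVec, h1, smul_smul] at h2
  have h4 : (lam * lam - c * lam) • ⇑(hB.eigenvectorBasis j) = 0 := by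
    rw [sub_smul, h2, sub_self]
  have h5 : ((lam * lam - c * lam) • ⇑(hB.eigenvectorBasis j)) ⬝ᵥ ⇑(hB.eigenvectorBasis j)
      = 0 := by rw [h4, zero_dotProduct]
  rw [smul_dotProduct, eig_basis_dot_one hB j, smul_eq_mul, mul_one] at h5
  linear_combination h5

lemma vecMulVec_mulVec' (u : M → ℝ) (v : N → ℝ) (x : N → ℝ) :
    vecMulVec u v *ᵥ x = (v ⬝ᵥ x) • u := by
  ext i
  simp [vecMulVec_apply, mulVec, dotProduct, Finset.sum_mul, Finset.mul_sum, mul_comm,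
    mul_assoc, mul_left_comm]

lemma vecMulVec_conjT_mul (u : M → ℝ) (v : N → ℝ) :
    (vecMulVec u v)ᴴ * (vecMulVec u v) = (u ⬝ᵥ u) • vecMulVec v v := by
  ext j k
  simp only [Matrix.mul_apply, conjTranspose_apply, vecMulVec_apply, star_trivial,
    Matrix.smul_apply, smul_eq_mul, dotProduct, Finset.sum_mul]
  exact Finset.sum_congr rfl fun i _ => by ring

lemma vecMulVec_mul_vecMulVec {P : Type*} (a : M → ℝ) (b c : N → ℝ) (d : P → ℝ) :
    vecMulVec a b * vecMulVec c d = (b ⬝ᵥ c) • vecMulVec a d := by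
  ext i j
  simp only [Matrix.mul_apply, vecMulVec_apply, Matrix.smul_apply, smul_eq_mul, dotProduct,
    Finset.sum_mul]
  exact Finset.sum_congr rfl fun k _ => by ring

lemma specnorm_le_one (W : Matrix M N ℝ) (u : M → ℝ) (v : N → ℝ) (m n : ℝ)
    (hm : 0 < m) (hn : 0 < n) (huu : u ⬝ᵥ u = m) (hvv : v ⬝ᵥ v = n)
    (hWv : W *ᵥ v = 0) (hWu : u ᵥ* W = 0) (hWnorm : matrixSpectralNorm W ≤ 1) :
    matrixSpectralNorm ((Real.sqrt (m * n))⁻¹ • vecMulVec u v + W) ≤ 1 := by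
  set s := Real.sqrt (m * n) with hsdef
  have hs : 0 < s := Real.sqrt_pos.2 (by positivity)
  have hss : s * s = m * n := Real.mul_self_sqrt (by positivity)
  apply spectralNorm_le_of _ zero_le_one
  intro x
  set α := (v ⬝ᵥ x) / n with hα
  set y := x - α • v with hy
  have hxy : x = y + α • v := by rw [hy]; abel
  have hvx : v ⬝ᵥ x = α * n := by rw [hα, div_mul_cancel₀ _ hn.ne']
  have hvy : v ⬝ᵥ y = 0 := by
    rw [hy, dotProduct_sub, dotProduct_smul, hvv, hvx]; simp [smul_eq_mul]
  have hWy : W *ᵥ x = W *ᵥ y := by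
    rw [hxy, Matrix.mulVec_add, Matrix.mulVec_smul, hWv]; simp
  have huWy : u ⬝ᵥ (W *ᵥ y) = 0 := by
    rw [Matrix.dotProduct_mulVec, hWu, zero_dotProduct]
  have hAx : ((s⁻¹ • vecMulVec u v + W) *ᵥ x) = (s⁻¹ * (α * n)) • u + W *ᵥ y := by
    rw [Matrix.add_mulVec, Matrix.smul_mulVec, vecMulVec_mulVec', hWy, hvx, smul_smul]
  have hc : s⁻¹ * (α * n) * (s⁻¹ * (α * n) * m) = α ^ 2 * n := by
    have hs0 : s ≠ 0 := ne_of_gt hs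
    field_simp
    rw [sq s, hss]; ring
  have key : ((s⁻¹ • vecMulVec u v + W) *ᵥ x) ⬝ᵥ ((s⁻¹ • vecMulVec u v + W) *ᵥ x)
      = α ^ 2 * n + (W *ᵥ y) ⬝ᵥ (W *ᵥ y) := by
    have hWyu : (W *ᵥ y) ⬝ᵥ u = 0 := by rw [dotProduct_comm]; exact huWy
    rw [hAx]
    simp only [add_dotProduct, dotProduct_add, smul_dotProduct,
      dotProduct_smul, huu, huWy, hWyu, smul_eq_mul, mul_zero, add_zero, zero_add]
    rw [hc]
  have hxx : x ⬝ᵥ x = y ⬝ᵥ y + α ^ 2 * n := by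
    have hyv : y ⬝ᵥ v = 0 := by rw [dotProduct_comm]; exact hvy
    rw [hxy]
    simp only [add_dotProduct, dotProduct_add, smul_dotProduct,
      dotProduct_smul, hvv, hvy, hyv, smul_eq_mul, mul_zero, add_zero, zero_add]
    ring
  have hW2 : (W *ᵥ y) ⬝ᵥ (W *ᵥ y) ≤ y ⬝ᵥ y := by
    apply dot_le_of_sqrt_le (dot_self_nonneg' _) (dot_self_nonneg' _)
    calc Real.sqrt ((W *ᵥ y) ⬝ᵥ (W *ᵥ y)) ≤ matrixSpectralNorm W * Real.sqrt (y ⬝ᵥ y) :=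
          mulVec_norm_le _ _
      _ ≤ 1 * Real.sqrt (y ⬝ᵥ y) :=
          mul_le_mul_of_nonneg_right hWnorm (Real.sqrt_nonneg _)
      _ = Real.sqrt (y ⬝ᵥ y) := one_mul _
  rw [one_mul]
  apply Real.sqrt_le_sqrt
  rw [key, hxx]
  linarith

end AuxHelpers

section CharVecHelpers
variable {ι : Type*} [Fintype ι] [DecidableEq ι]

lemma charVec_sum (S : Finset ι) : ∑ i, charVec S i = S.card := by
  simp [charVec]

lemma charVec_dot (S : Finset ι) : charVec S ⬝ᵥ charVec S = S.card := by
  simp [dotProduct, charVec, ite_and]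

end CharVecHelpers

/-- under the KKT-type conditions, `X* = ū v̄ᵀ` is an optimal solution of the
relaxation (R): every feasible `X` has `‖X‖_* ≥ ‖X*‖_* = √(mn)`. -/
theorem relaxation_optimality
    (M N m n : ℕ) (hm : 1 ≤ m) (hn : 1 ≤ n)
    (E : Set (Fin M × Fin N))
    (Ustar : Finset (Fin M)) (Vstar : Finset (Fin N))
    (hUm : Ustar.card = m) (hVn : Vstar.card = n)
    (hfeas : ∀ i ∈ Ustar, ∀ j ∈ Vstar, (i, j) ∈ E)
    (W Λ : Matrix (Fin M) (Fin N) ℝ) (μ : ℝ) (hμ : 0 ≤ μ)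
    (hWv : W *ᵥ charVec Vstar = 0)
    (hWu : charVec Ustar ᵥ* W = 0)
    (hWnorm : matrixSpectralNorm W ≤ 1)
    (hΛ : ∀ i j, (i, j) ∈ E → Λ i j = 0)
    (heq : (Real.sqrt ((m : ℝ) * n))⁻¹ • vecMulVec (charVec Ustar) (charVec Vstar) + W
         = μ • Matrix.of (fun _ _ => (1 : ℝ)) + Λ) :
    (∀ X : Matrix (Fin M) (Fin N) ℝ, FeasR E m n X →
        nuclearNorm X ≥ Real.sqrt ((m : ℝ) * n)) ∧
    nuclearNorm (vecMulVec (charVec Ustar) (charVec Vstar)) = Real.sqrt ((m : ℝ) * n) := by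
  classical
  set u := charVec Ustar with hu
  set v := charVec Vstar with hv
  set s := Real.sqrt ((m : ℝ) * n) with hsdef
  have hm' : (0 : ℝ) < m := by exact_mod_cast hm
  have hn' : (0 : ℝ) < n := by exact_mod_cast hn
  have hs : 0 < s := Real.sqrt_pos.2 (by positivity)
  have hss : s * s = (m : ℝ) * n := Real.mul_self_sqrt (by positivity)
  have huu : u ⬝ᵥ u = (m : ℝ) := by rw [hu, charVec_dot, hUm]
  have hvv : v ⬝ᵥ v = (n : ℝ) := by rw [hv, charVec_dot, hVn]
  have husum : ∑ i, u i = (m : ℝ) := by rw [hu, charVec_sum, hUm]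
  have hvsum : ∑ j, v j = (n : ℝ) := by rw [hv, charVec_sum, hVn]
  set A := s⁻¹ • vecMulVec u v + W with hA
  have hA1 : matrixSpectralNorm A ≤ 1 :=
    specnorm_le_one W u v m n hm' hn' huu hvv hWv hWu hWnorm
  have hentry : ∀ i j, A i j = μ + Λ i j := by
    intro i j
    have h := congrFun (congrFun heq i) j
    simpa [Matrix.add_apply, Matrix.smul_apply, Matrix.of_apply, smul_eq_mul] using h
  have hΛY : ∀ i j, Λ i j * (u i * v j) = 0 := by
    intro i j
    by_cases hiU : i ∈ Ustar
    · by_cases hjV : j ∈ Vstar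
      · rw [hΛ i j (hfeas i hiU j hjV)]; ring
      · simp [hv, charVec, hjV]
    · simp [hu, charVec, hiU]
  have hsum : ∀ X : Matrix (Fin M) (Fin N) ℝ, (∀ i j, Λ i j * X i j = 0) →
      ∑ i, ∑ j, A i j * X i j = μ * ∑ i, ∑ j, X i j := by
    intro X hX
    rw [Finset.mul_sum]
    refine Finset.sum_congr rfl fun i _ => ?_
    rw [Finset.mul_sum]
    refine Finset.sum_congr rfl fun j _ => ?_
    rw [hentry i j, add_mul, hX i j, add_zero]
  have hYsum : ∑ i, ∑ j, (u i * v j) = (m : ℝ) * n := by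
    rw [← husum, ← hvsum, Finset.sum_mul_sum]
  have hAY : ∑ i, ∑ j, A i j * (u i * v j) = s := by
    have expand : ∀ i j, A i j * (u i * v j)
        = s⁻¹ * ((u i * u i) * (v j * v j)) + u i * (W i j * v j) := by
      intro i j
      rw [hA]
      simp only [Matrix.add_apply, Matrix.smul_apply, vecMulVec_apply, smul_eq_mul]
      ring
    have e1 : s⁻¹ * ((u ⬝ᵥ u) * (v ⬝ᵥ v)) = ∑ i, ∑ j, (s⁻¹ * ((u i * u i) * (v j * v j))) := by
      rw [dotProduct, dotProduct, Finset.sum_mul_sum, Finset.mul_sum]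
      exact Finset.sum_congr rfl fun i _ => Finset.mul_sum _ _ _
    have e2 : u ⬝ᵥ (W *ᵥ v) = ∑ i, ∑ j, (u i * (W i j * v j)) := by
      simp [dotProduct, mulVec, Finset.mul_sum]
    calc ∑ i, ∑ j, A i j * (u i * v j)
        = ∑ i, ∑ j, (s⁻¹ * ((u i * u i) * (v j * v j)) + u i * (W i j * v j)) := by
          exact Finset.sum_congr rfl fun i _ => Finset.sum_congr rfl fun j _ => expand i j
      _ = (∑ i, ∑ j, (s⁻¹ * ((u i * u i) * (v j * v j))))
            + ∑ i, ∑ j, (u i * (W i j * v j)) := by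
          rw [← Finset.sum_add_distrib]
          exact Finset.sum_congr rfl fun i _ => Finset.sum_add_distrib
      _ = s⁻¹ * ((u ⬝ᵥ u) * (v ⬝ᵥ v)) + u ⬝ᵥ (W *ᵥ v) := by rw [e1, e2]
      _ = s := by
          rw [huu, hvv, hWv, dotProduct_zero, add_zero, ← hss]
          field_simp
  have hμs : μ * ((m : ℝ) * n) = s := by
    have h1 := hsum (vecMulVec u v) (fun i j => by
      simpa [vecMulVec_apply] using hΛY i j)
    have h2 : ∑ i, ∑ j, A i j * (vecMulVec u v) i j = s := by
      simpa [vecMulVec_apply] using hAY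
    have h3 : ∑ i, ∑ j, (vecMulVec u v) i j = (m : ℝ) * n := by
      simpa [vecMulVec_apply] using hYsum
    rw [h2, h3] at h1
    exact h1.symm
  constructor
  · intro X hX
    obtain ⟨hX1, hX2⟩ := hX
    have hΛX : ∀ i j, Λ i j * X i j = 0 := by
      intro i j; by_cases hij : (i, j) ∈ E
      · rw [hΛ i j hij, zero_mul]
      · rw [hX2 i j hij, mul_zero]
    have h2 : ∑ i, ∑ j, A i j * X i j = μ * ∑ i, ∑ j, X i j := hsum X hΛX
    have h3 : s ≤ μ * ∑ i, ∑ j, X i j := by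
      rw [← hμs]
      exact mul_le_mul_of_nonneg_left hX1 hμ
    exact le_trans (h3.trans_eq h2.symm) (sum_mul_le_nuclearNorm A X hA1)
  · -- nuclear norm of X*
    set Y := vecMulVec u v with hY
    set hB := isHermitian_transpose_mul_self_real Y with hBdef
    have hBeq : Yᴴ * Y = (m : ℝ) • vecMulVec v v := by
      rw [hY, vecMulVec_conjT_mul, huu]
    have hsq : (Yᴴ * Y) * (Yᴴ * Y) = ((m : ℝ) * n) • (Yᴴ * Y) := by
      rw [hBeq, smul_mul_assoc, mul_smul_comm, _root_.vecMulVec_mul_vecMulVec, hvv,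
        smul_smul, smul_smul, smul_smul]
      congr 1
      ring
    have quad := eig_quadratic hB hsq
    have hsqrt : ∀ j, Real.sqrt (hB.eigenvalues j) = hB.eigenvalues j / s := by
      intro j
      rcases mul_eq_zero.1 (quad j) with h | h
      · rw [h]; simp
      · have hj : hB.eigenvalues j = (m : ℝ) * n := by linarith
        rw [hj, ← hss, Real.sqrt_mul_self hs.le, eq_div_iff hs.ne']
    have htr : ∑ j, hB.eigenvalues j = (m : ℝ) * n := by
      rw [← trace_eq_sum_eig, ← conjT_real, hBeq, Matrix.trace_smul]
      have : (vecMulVec v v).trace = (n : ℝ) := by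
        rw [← hvv]
        simp [Matrix.trace, Matrix.diag, vecMulVec_apply, dotProduct]
      rw [this, smul_eq_mul]
    unfold nuclearNorm
    rw [Finset.sum_congr rfl (fun j _ => hsqrt j), ← Finset.sum_div, htr, ← hss]
    field_simp
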